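/- With notation as before: d ≥ 1, σ > 1, η > 0, 0 < ε < η, α ≥ 1, A = 2√d·σ/(σ²−1), h(σ) = 2σ²·log σ/(σ²−1), g(α) = (1+α)/2·η − ε, z₊(α) = −A·g(α) + √((A/σ)²·g(α)² + h(σ)/σ²), z₋(α) = (A/σ)·g(α) − √(A²·g(α)² + h(σ)). Then the robust accuracy disparity D_rob(α) = Φ(z₊(α)) − Φ(z₋(α)) is strictly monotonically decreasing in α. -/

import Mathlib

open Real Set

/-- Standard normal cumulative distribution function. -/
noncomputable def stdNormalCDF (z : ℝ) : ℝ :=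
  ∫ t in Set.Iic z, (Real.sqrt (2 * Real.pi))⁻¹ * Real.exp (-t ^ 2 / 2)

lemma gauss_integrable :
    MeasureTheory.Integrable (fun t : ℝ => (Real.sqrt (2 * Real.pi))⁻¹ * Real.exp (-t ^ 2 / 2)) := by
  have h := (integrable_exp_neg_mul_sq (by norm_num : (0:ℝ) < 1/2)).const_mul
    ((Real.sqrt (2 * Real.pi))⁻¹)
  convert h using 2 with t
  ring_nf

lemma gauss_continuous :
    Continuous (fun t : ℝ => (Real.sqrt (2 * Real.pi))⁻¹ * Real.exp (-t ^ 2 / 2)) := by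
  fun_prop

lemma hasDerivAt_stdNormalCDF (z : ℝ) :
    HasDerivAt stdNormalCDF ((Real.sqrt (2 * Real.pi))⁻¹ * Real.exp (-z ^ 2 / 2)) z := by
  set f : ℝ → ℝ := fun t => (Real.sqrt (2 * Real.pi))⁻¹ * Real.exp (-t ^ 2 / 2) with hf
  have hint := gauss_integrable
  have key : stdNormalCDF = fun w => stdNormalCDF 0 + ∫ t in (0:ℝ)..w, f t := by
    funext w
    have := intervalIntegral.integral_Iic_sub_Iic (μ := MeasureTheory.volume) (f := f)
      (a := (0:ℝ)) (b := w) hint.integrableOn hint.integrableOn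
    simp only [stdNormalCDF]
    rw [← this]; ring
  rw [key]
  exact (intervalIntegral.integral_hasDerivAt_right hint.intervalIntegrable
    (gauss_continuous.stronglyMeasurableAtFilter _ _) gauss_continuous.continuousAt).const_add _

lemma deriv_neg_aux (σ Xv Sv h b c1 : ℝ) (hσ : 1 < σ) (hS0 : 0 < Sv) (hh0 : 0 < h)
    (hb0 : 0 < b) (hc10 : 0 < c1) (hssq : Sv ^ 2 = Xv ^ 2 + h) :
    c1 * Real.exp (-(-Xv + Sv / σ) ^ 2 / 2) * (-b + Xv * b / Sv / σ)
      - c1 * Real.exp (-(Xv / σ - Sv) ^ 2 / 2) * (b / σ - Xv * b / Sv) < 0 := by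
  have hσ0 : (0:ℝ) < σ := lt_trans one_pos hσ
  have hXS : Xv < Sv := by nlinarith
  have hXSn : -Sv < Xv := by nlinarith
  set E1 := Real.exp (-(-Xv + Sv / σ) ^ 2 / 2) with hE1
  set E2 := Real.exp (-(Xv / σ - Sv) ^ 2 / 2) with hE2
  have hE10 : 0 < E1 := Real.exp_pos _
  have hE20 : 0 < E2 := Real.exp_pos _
  have hsqlt : (-Xv + Sv / σ) ^ 2 < (Xv / σ - Sv) ^ 2 := by
    have hexp : (Xv / σ - Sv) ^ 2 - (-Xv + Sv / σ) ^ 2 = (Sv ^ 2 - Xv ^ 2) * (1 - 1 / σ ^ 2) := by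
      field_simp; ring
    have h3 : 0 < 1 - 1 / σ ^ 2 := by
      have : 1 / σ ^ 2 < 1 := by rw [div_lt_one (by positivity)]; nlinarith
      linarith
    nlinarith
  have hE12 : E2 < E1 := by
    rw [hE1, hE2, Real.exp_lt_exp]
    linarith
  have hmain : E2 * (σ * Xv - Sv) < E1 * (σ * Sv - Xv) := by
    have ha : 0 < σ * Sv - Xv := by nlinarith
    by_cases hc : σ * Xv - Sv ≤ 0
    · have : E2 * (σ * Xv - Sv) ≤ 0 := mul_nonpos_of_nonneg_of_nonpos hE20.le hc
      nlinarith
    · push_neg at hc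
      have hab : σ * Xv - Sv < σ * Sv - Xv := by nlinarith
      nlinarith [mul_pos hE20 (sub_pos.mpr hab), mul_pos (sub_pos.mpr hE12) ha]
  have heq : c1 * E1 * (-b + Xv * b / Sv / σ) - c1 * E2 * (b / σ - Xv * b / Sv)
      = (c1 * b / (σ * Sv)) * (E1 * (Xv - σ * Sv) - E2 * (Sv - σ * Xv)) := by
    field_simp
    ring
  rw [heq]
  apply mul_neg_of_pos_of_neg (by positivity)
  nlinarith [hmain]

theorem stmt3 (d : ℕ) (σ η ε : ℝ) (hd : 1 ≤ d) (hσ : 1 < σ) (hη : 0 < η)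
    (hε0 : 0 < ε) (hεη : ε < η)
    (A h : ℝ) (hA : A = 2 * Real.sqrt d * σ / (σ ^ 2 - 1))
    (hh : h = 2 * σ ^ 2 * Real.log σ / (σ ^ 2 - 1))
    (g zp zm Drob : ℝ → ℝ)
    (hg : ∀ α, g α = (1 + α) / 2 * η - ε)
    (hzp : ∀ α, zp α = -A * g α + Real.sqrt ((A / σ) ^ 2 * (g α) ^ 2 + h / σ ^ 2))
    (hzm : ∀ α, zm α = (A / σ) * g α - Real.sqrt (A ^ 2 * (g α) ^ 2 + h))
    (hD : ∀ α, Drob α = stdNormalCDF (zp α) - stdNormalCDF (zm α)) :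
    StrictAntiOn Drob (Set.Ici (1 : ℝ)) := by
  have hσ0 : (0:ℝ) < σ := lt_trans one_pos hσ
  have hσ2 : (0:ℝ) < σ ^ 2 - 1 := by nlinarith
  have hd0 : (0:ℝ) < Real.sqrt d :=
    Real.sqrt_pos.mpr (by exact_mod_cast Nat.lt_of_lt_of_le Nat.zero_lt_one hd)
  have hA0 : 0 < A := by rw [hA]; positivity
  have hh0 : 0 < h := by
    rw [hh]
    have := Real.log_pos hσ
    positivity
  have hc10 : 0 < (Real.sqrt (2 * Real.pi))⁻¹ := by
    have : (0:ℝ) < Real.sqrt (2 * Real.pi) := Real.sqrt_pos.mpr (by positivity)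
    positivity
  set X : ℝ → ℝ := fun α => A * ((1 + α) / 2 * η - ε) with hXdef
  set S : ℝ → ℝ := fun α => Real.sqrt (X α ^ 2 + h) with hSdef
  have hargpos : ∀ α, 0 < X α ^ 2 + h := fun α => by positivity
  have hSpos : ∀ α, 0 < S α := fun α => Real.sqrt_pos.mpr (hargpos α)
  have hSsq : ∀ α, S α ^ 2 = X α ^ 2 + h := fun α => Real.sq_sqrt (hargpos α).le
  -- rewrite zp, zm in terms of X and S
  have hzpF : zp = fun α => -(X α) + S α / σ := by
    funext α
    rw [hzp α, hg α]
    have h1 : (A / σ) ^ 2 * ((1 + α) / 2 * η - ε) ^ 2 + h / σ ^ 2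
        = (X α ^ 2 + h) * (1 / σ) ^ 2 := by
      simp only [hXdef]; field_simp
    rw [h1, Real.sqrt_mul (hargpos α).le, Real.sqrt_sq (by positivity : (0:ℝ) ≤ 1/σ)]
    simp only [hXdef, hSdef]
    ring
  have hzmF : zm = fun α => X α / σ - S α := by
    funext α
    rw [hzm α, hg α]
    have h1 : A ^ 2 * ((1 + α) / 2 * η - ε) ^ 2 + h = X α ^ 2 + h := by
      simp only [hXdef]; ring
    rw [h1]
    simp only [hXdef, hSdef]
    ring
  have hDF : Drob = fun α => stdNormalCDF (zp α) - stdNormalCDF (zm α) := funext hD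
  rw [hDF, hzpF, hzmF]
  have hb0 : 0 < A * (η / 2) := by positivity
  -- derivatives
  have hX' : ∀ α, HasDerivAt X (A * (η / 2)) α := by
    intro α
    have h1 : HasDerivAt (fun α : ℝ => (1 + α) / 2 * η - ε) (η / 2) α := by
      have := ((((hasDerivAt_id α).const_add 1).div_const 2).mul_const η).sub_const ε
      exact this.congr_deriv (by ring)
    exact h1.const_mul A
  have hS' : ∀ α, HasDerivAt S (X α * (A * (η / 2)) / S α) α := by
    intro α
    have h1 : HasDerivAt (fun α => X α ^ 2 + h) (2 * X α * (A * (η / 2))) α := by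
      have := ((hX' α).pow 2).add_const h
      exact this.congr_deriv (by norm_num)
    have h2 := h1.sqrt (ne_of_gt (hargpos α))
    convert h2 using 1
    have hse : Real.sqrt (X α ^ 2 + h) = S α := rfl
    rw [hse]
    have hs := (hSpos α).ne'
    field_simp
  have key : ∀ α : ℝ,
      HasDerivAt (fun α => stdNormalCDF (-(X α) + S α / σ) - stdNormalCDF (X α / σ - S α))
        ((Real.sqrt (2 * Real.pi))⁻¹ * Real.exp (-(-(X α) + S α / σ) ^ 2 / 2)
            * (-(A * (η / 2)) + X α * (A * (η / 2)) / S α / σ)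
          - (Real.sqrt (2 * Real.pi))⁻¹ * Real.exp (-(X α / σ - S α) ^ 2 / 2)
            * (A * (η / 2) / σ - X α * (A * (η / 2)) / S α)) α := by
    intro α
    have hp : HasDerivAt (fun α => -(X α) + S α / σ)
        (-(A * (η / 2)) + X α * (A * (η / 2)) / S α / σ) α :=
      (hX' α).neg.add ((hS' α).div_const σ)
    have hm : HasDerivAt (fun α => X α / σ - S α)
        (A * (η / 2) / σ - X α * (A * (η / 2)) / S α) α :=
      ((hX' α).div_const σ).sub (hS' α)
    exact ((hasDerivAt_stdNormalCDF _).comp α hp).sub ((hasDerivAt_stdNormalCDF _).comp α hm)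
  have hanti : StrictAnti (fun α => stdNormalCDF (-(X α) + S α / σ) - stdNormalCDF (X α / σ - S α)) := by
    apply strictAnti_of_deriv_neg
    intro α
    rw [(key α).deriv]
    have := deriv_neg_aux σ (X α) (S α) h (A * (η / 2)) ((Real.sqrt (2 * Real.pi))⁻¹)
      hσ (hSpos α) hh0 hb0 hc10 (hSsq α)
    convert this using 2 <;> ring
  exact hanti.strictAntiOn _
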